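/- Define, for μ ∈ ℝ and x, y > 0, ρ(y; x, μ) = (2π)^{-1/2} [e^{−(μ² + x² + y²)/2} / (e^{μ x} + e^{−μ x})] (e^{μ y} + e^{−μ y})(e^{x y} + e^{−x y}) (this is the transition probability density of the Markov chain (|W_n^μ|)_{n≥0}). Then for 0 ≤ μ' < μ'' and 0 < x' ≤ x'', the ratio y ↦ ρ(y; x'', μ'') / ρ(y; x', μ') is non-decreasing in y on (0,∞); equivalently, the functions y ↦ (e^{μ'' y} + e^{−μ'' y})/(e^{μ' y} + e^{−μ' y}) and y ↦ (e^{x'' y} + e^{−x'' y})/(e^{x' y} + e^{−x' y}) are both non-decreasing on (0,∞). Consequently, for 0 ≤ μ' < μ'' and 0 < x' ≤ x'', the probability density y ↦ ρ(y; x', μ') is smaller than y ↦ ρ(y; x'', μ'') in the likelihood ratio order, and hence ∫_b^∞ ρ(y; x', μ') dy ≤ ∫_b^∞ ρ(y; x'', μ'') dy for every b > 0. -/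

import Mathlib

open MeasureTheory Real

/-- The transition probability density of the Markov chain `(|W_n^μ|)_{n ≥ 0}`:
`ρ(y; x, μ) = (2π)^{-1/2} [e^{−(μ² + x² + y²)/2} / (e^{μx} + e^{−μx})]
  (e^{μy} + e^{−μy})(e^{xy} + e^{−xy})`. -/
noncomputable def rho (y x μ : ℝ) : ℝ :=
  Real.rpow (2 * Real.pi) (-(1/2))
    * (Real.exp (-(μ ^ 2 + x ^ 2 + y ^ 2) / 2) / (Real.exp (μ * x) + Real.exp (-(μ * x))))
    * (Real.exp (μ * y) + Real.exp (-(μ * y)))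
    * (Real.exp (x * y) + Real.exp (-(x * y)))

lemma expand_rho (y x μ : ℝ) :
    Real.exp (-(μ^2+x^2+y^2)/2) * ((Real.exp (μ*y) + Real.exp (-(μ*y))) * (Real.exp (x*y) + Real.exp (-(x*y))))
    = Real.exp (μ*x) * (Real.exp (-(1/2)*(y-(μ+x))^2) + Real.exp (-(1/2)*(y+(μ+x))^2))
      + Real.exp (-(μ*x)) * (Real.exp (-(1/2)*(y-(x-μ))^2) + Real.exp (-(1/2)*(y+(x-μ))^2)) := by
  simp only [mul_add, add_mul, ← Real.exp_add]
  ring_nf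

lemma rho_eq (y x μ : ℝ) :
    rho y x μ = Real.rpow (2*Real.pi) (-(1/2)) *
      ((Real.exp (μ*x) * (Real.exp (-(1/2)*(y-(μ+x))^2) + Real.exp (-(1/2)*(y+(μ+x))^2))
        + Real.exp (-(μ*x)) * (Real.exp (-(1/2)*(y-(x-μ))^2) + Real.exp (-(1/2)*(y+(x-μ))^2)))
        / (Real.exp (μ*x) + Real.exp (-(μ*x)))) := by
  rw [← expand_rho y x μ]; unfold rho; rw [neg_div]; ring

lemma integrable_g (c : ℝ) : Integrable (fun y : ℝ => Real.exp (-(1/2)*(y-c)^2)) := by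
  have h := (integrable_exp_neg_mul_sq (by norm_num : (0:ℝ) < 1/2)).comp_sub_right c
  simpa using h

lemma integrable_g' (c : ℝ) : Integrable (fun y : ℝ => Real.exp (-(1/2)*(y+c)^2)) := by
  have h := integrable_g (-c)
  simpa [sub_neg_eq_add] using h

lemma integral_g (c : ℝ) : ∫ y : ℝ, Real.exp (-(1/2)*(y-c)^2) = Real.sqrt (2*Real.pi) := by
  have h : ∫ y : ℝ, Real.exp (-(1/2)*(y-c)^2) = ∫ y : ℝ, Real.exp (-(1/2)*y^2) := by
    have := integral_add_right_eq_self (μ := volume) (fun y : ℝ => Real.exp (-(1/2)*y^2)) (-c)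
    simpa [sub_eq_add_neg] using this
  rw [h]
  have hg := integral_gaussian (1/2)
  rw [show Real.pi / (1/2 : ℝ) = 2*Real.pi by ring] at hg
  rw [← hg]

lemma gauss_pair (c : ℝ) :
    ∫ y in Set.Ioi (0:ℝ), (Real.exp (-(1/2)*(y-c)^2) + Real.exp (-(1/2)*(y+c)^2)) = Real.sqrt (2*Real.pi) := by
  rw [integral_add ((integrable_g c).integrableOn) (integrable_g' c).integrableOn]
  have h2 : ∫ y in Set.Ioi (0:ℝ), Real.exp (-(1/2)*(y+c)^2)
      = ∫ y in Set.Iic (0:ℝ), Real.exp (-(1/2)*(y-c)^2) := by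
    have := integral_comp_neg_Ioi (0:ℝ) (fun y => Real.exp (-(1/2)*(y-c)^2))
    rw [neg_zero] at this
    rw [← this]
    congr 1; funext y; ring_nf
  rw [h2, add_comm,
    intervalIntegral.integral_Iic_add_Ioi (integrable_g c).integrableOn (integrable_g c).integrableOn,
    integral_g]

lemma rho_fun_eq (x μ : ℝ) : (fun y => rho y x μ) = fun y =>
      (Real.rpow (2*Real.pi) (-(1/2)) * Real.exp (μ*x) / (Real.exp (μ*x)+Real.exp (-(μ*x)))) *
        (Real.exp (-(1/2)*(y-(μ+x))^2) + Real.exp (-(1/2)*(y+(μ+x))^2))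
      + (Real.rpow (2*Real.pi) (-(1/2)) * Real.exp (-(μ*x)) / (Real.exp (μ*x)+Real.exp (-(μ*x)))) *
        (Real.exp (-(1/2)*(y-(x-μ))^2) + Real.exp (-(1/2)*(y+(x-μ))^2)) := by
  funext y; rw [rho_eq]; ring

lemma rho_integrable (x μ : ℝ) : Integrable (fun y => rho y x μ) := by
  rw [rho_fun_eq]
  exact ((((integrable_g _).add (integrable_g' _)).const_mul _).add
    (((integrable_g _).add (integrable_g' _)).const_mul _))

lemma rho_integral (x μ : ℝ) : ∫ y in Set.Ioi (0:ℝ), rho y x μ = 1 := by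
  have I1 : Integrable (fun y : ℝ =>
      (Real.rpow (2*Real.pi) (-(1/2)) * Real.exp (μ*x) / (Real.exp (μ*x)+Real.exp (-(μ*x)))) *
        (Real.exp (-(1/2)*(y-(μ+x))^2) + Real.exp (-(1/2)*(y+(μ+x))^2))) :=
    ((integrable_g _).add (integrable_g' _)).const_mul _
  have I2 : Integrable (fun y : ℝ =>
      (Real.rpow (2*Real.pi) (-(1/2)) * Real.exp (-(μ*x)) / (Real.exp (μ*x)+Real.exp (-(μ*x)))) *
        (Real.exp (-(1/2)*(y-(x-μ))^2) + Real.exp (-(1/2)*(y+(x-μ))^2))) :=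
    ((integrable_g _).add (integrable_g' _)).const_mul _
  rw [rho_fun_eq]
  rw [integral_add I1.integrableOn I2.integrableOn,
    MeasureTheory.integral_const_mul, MeasureTheory.integral_const_mul, gauss_pair, gauss_pair]
  have hD : Real.exp (μ*x) + Real.exp (-(μ*x)) ≠ 0 := by positivity
  have hr : Real.rpow (2*Real.pi) (-(1/2)) * Real.sqrt (2*Real.pi) = 1 := by
    rw [Real.sqrt_eq_rpow]
    rw [show Real.rpow (2*Real.pi) (-(1/2)) = (2*Real.pi) ^ (-(1/2) : ℝ) from rfl,
      ← Real.rpow_add (by positivity)]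
    norm_num
  have hsplit : Real.rpow (2*Real.pi) (-(1/2)) * Real.exp (μ*x) / (Real.exp (μ*x)+Real.exp (-(μ*x))) * Real.sqrt (2*Real.pi)
      + Real.rpow (2*Real.pi) (-(1/2)) * Real.exp (-(μ*x)) / (Real.exp (μ*x)+Real.exp (-(μ*x))) * Real.sqrt (2*Real.pi)
      = (Real.rpow (2*Real.pi) (-(1/2)) * Real.sqrt (2*Real.pi))
        * ((Real.exp (μ*x)+Real.exp (-(μ*x))) / (Real.exp (μ*x)+Real.exp (-(μ*x)))) := by
    ring
  rw [hsplit, hr, one_mul, div_self hD]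

lemma rho_pos (y x μ : ℝ) : 0 < rho y x μ := by
  unfold rho
  have h1 : 0 < Real.rpow (2 * Real.pi) (-(1/2)) :=
    Real.rpow_pos_of_pos (by positivity) _
  positivity

lemma cosh_ratio_mono {a b : ℝ} (ha : 0 ≤ a) (hab : a ≤ b) :
    MonotoneOn (fun y => (Real.exp (b * y) + Real.exp (-(b * y)))
      / (Real.exp (a * y) + Real.exp (-(a * y)))) (Set.Ioi (0 : ℝ)) := by
  intro y₁ h₁ y₂ h₂ h12
  simp only [Set.mem_Ioi] at h₁ h₂
  have hb : 0 ≤ b := ha.trans hab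
  have d1 : 0 < Real.exp (a * y₁) + Real.exp (-(a * y₁)) := by positivity
  have d2 : 0 < Real.exp (a * y₂) + Real.exp (-(a * y₂)) := by positivity
  simp only
  rw [div_le_div_iff₀ d1 d2]
  have key : ∀ t : ℝ, Real.exp t + Real.exp (-t) = 2 * Real.cosh t := by
    intro t; rw [Real.cosh_eq]; ring
  rw [key, key, key, key]
  have h2c : ∀ u v : ℝ, 2 * (Real.cosh u * Real.cosh v) = Real.cosh (u + v) + Real.cosh (u - v) := by
    intro u v; rw [Real.cosh_add, Real.cosh_sub]; ring
  have i1 : Real.cosh (b * y₁ + a * y₂) ≤ Real.cosh (b * y₂ + a * y₁) := by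
    rw [Real.cosh_le_cosh]
    apply abs_le_abs
    · nlinarith [mul_nonneg (sub_nonneg.2 hab) (sub_nonneg.2 h12)]
    · nlinarith [mul_nonneg hb h₁.le, mul_nonneg hb h₂.le, mul_nonneg ha h₁.le, mul_nonneg ha h₂.le]
  have i2 : Real.cosh (b * y₁ - a * y₂) ≤ Real.cosh (b * y₂ - a * y₁) := by
    rw [Real.cosh_le_cosh]
    apply abs_le_abs
    · nlinarith [mul_nonneg (add_nonneg ha hb) (sub_nonneg.2 h12)]
    · nlinarith [mul_nonneg (sub_nonneg.2 hab) (by linarith : (0:ℝ) ≤ y₁ + y₂)]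
  nlinarith [h2c (b*y₁) (a*y₂), h2c (b*y₂) (a*y₁)]

/-- For `0 ≤ μ' < μ''` and `0 < x' ≤ x''`, the ratio `y ↦ ρ(y; x'', μ'')/ρ(y; x', μ')` is
non-decreasing on `(0,∞)`; equivalently the two factor ratios
`y ↦ (e^{μ''y} + e^{−μ''y})/(e^{μ'y} + e^{−μ'y})` and
`y ↦ (e^{x''y} + e^{−x''y})/(e^{x'y} + e^{−x'y})` are non-decreasing on `(0,∞)`.
Consequently `ρ(·; x', μ')` is smaller than `ρ(·; x'', μ'')` in the likelihood ratio order,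
and hence `∫_b^∞ ρ(y; x', μ') dy ≤ ∫_b^∞ ρ(y; x'', μ'') dy` for every `b > 0`. -/
theorem rho_likelihood_ratio_monotone
    (μ' μ'' x' x'' : ℝ) (hμ'0 : 0 ≤ μ') (hμ : μ' < μ'') (hx'0 : 0 < x') (hx : x' ≤ x'') :
    MonotoneOn (fun y => rho y x'' μ'' / rho y x' μ') (Set.Ioi (0 : ℝ)) ∧
    MonotoneOn (fun y =>
      (Real.exp (μ'' * y) + Real.exp (-(μ'' * y)))
        / (Real.exp (μ' * y) + Real.exp (-(μ' * y)))) (Set.Ioi (0 : ℝ)) ∧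
    MonotoneOn (fun y =>
      (Real.exp (x'' * y) + Real.exp (-(x'' * y)))
        / (Real.exp (x' * y) + Real.exp (-(x' * y)))) (Set.Ioi (0 : ℝ)) ∧
    ∀ b : ℝ, 0 < b →
      ∫ y in Set.Ioi b, rho y x' μ' ≤ ∫ y in Set.Ioi b, rho y x'' μ'' := by
  have m1 := cosh_ratio_mono hμ'0 hμ.le
  have m2 := cosh_ratio_mono hx'0.le hx
  set C : ℝ := (Real.exp (-(μ''^2+x''^2)/2) * (Real.exp (μ'*x') + Real.exp (-(μ'*x'))))
      / (Real.exp (-(μ'^2+x'^2)/2) * (Real.exp (μ''*x'') + Real.exp (-(μ''*x'')))) with hCdef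
  have hC : 0 ≤ C := by positivity
  have hratio : ∀ y : ℝ, rho y x'' μ'' / rho y x' μ' =
      C * (((Real.exp (μ''*y) + Real.exp (-(μ''*y))) / (Real.exp (μ'*y) + Real.exp (-(μ'*y))))
        * ((Real.exp (x''*y) + Real.exp (-(x''*y))) / (Real.exp (x'*y) + Real.exp (-(x'*y))))) := by
    intro y
    have e1 : Real.exp (-(μ''^2+x''^2+y^2)/2) = Real.exp (-(μ''^2+x''^2)/2) * Real.exp (-(y^2)/2) := by
      rw [← Real.exp_add]; ring_nf
    have e2 : Real.exp (-(μ'^2+x'^2+y^2)/2) = Real.exp (-(μ'^2+x'^2)/2) * Real.exp (-(y^2)/2) := by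
      rw [← Real.exp_add]; ring_nf
    unfold rho
    rw [e1, e2, hCdef]
    have hr : Real.rpow (2 * Real.pi) (-(1/2)) ≠ 0 :=
      ne_of_gt (Real.rpow_pos_of_pos (by positivity) _)
    have n1 : Real.exp (μ'*x') + Real.exp (-(μ'*x')) ≠ 0 := by positivity
    have n2 : Real.exp (μ''*x'') + Real.exp (-(μ''*x'')) ≠ 0 := by positivity
    have n3 : Real.exp (μ'*y) + Real.exp (-(μ'*y)) ≠ 0 := by positivity
    have n4 : Real.exp (x'*y) + Real.exp (-(x'*y)) ≠ 0 := by positivity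
    field_simp
  have mono : MonotoneOn (fun y => rho y x'' μ'' / rho y x' μ') (Set.Ioi (0 : ℝ)) := by
    have hfe : (fun y => rho y x'' μ'' / rho y x' μ') =
        fun y => C * (((Real.exp (μ''*y) + Real.exp (-(μ''*y))) / (Real.exp (μ'*y) + Real.exp (-(μ'*y))))
          * ((Real.exp (x''*y) + Real.exp (-(x''*y))) / (Real.exp (x'*y) + Real.exp (-(x'*y))))) :=
      funext hratio
    rw [hfe]
    intro a ha b hb hab
    have f1a : (0:ℝ) ≤ (Real.exp (μ''*a) + Real.exp (-(μ''*a))) / (Real.exp (μ'*a) + Real.exp (-(μ'*a))) := by positivity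
    have f2b : (0:ℝ) ≤ (Real.exp (x''*b) + Real.exp (-(x''*b))) / (Real.exp (x'*b) + Real.exp (-(x'*b))) := by positivity
    have f2a : (0:ℝ) ≤ (Real.exp (x''*a) + Real.exp (-(x''*a))) / (Real.exp (x'*a) + Real.exp (-(x'*a))) := by positivity
    exact mul_le_mul_of_nonneg_left
      (mul_le_mul (m1 ha hb hab) (m2 ha hb hab) f2a (le_trans f1a (m1 ha hb hab))) hC
  refine ⟨mono, m1, m2, ?_⟩
  intro b hb
  have hbmem : b ∈ Set.Ioi (0:ℝ) := hb
  by_cases hcase : 1 ≤ rho b x'' μ'' / rho b x' μ'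
  · apply setIntegral_mono_on ((rho_integrable x' μ').integrableOn)
      ((rho_integrable x'' μ'').integrableOn) measurableSet_Ioi
    intro y hy
    have hy' : b < y := hy
    have hy0 : y ∈ Set.Ioi (0:ℝ) := lt_trans hb hy'
    have hmle := mono hbmem hy0 hy'.le
    exact (one_le_div (rho_pos y x' μ')).1 (le_trans hcase hmle)
  · push_neg at hcase
    have hle : ∀ y ∈ Set.Ioc (0:ℝ) b, rho y x'' μ'' ≤ rho y x' μ' := by
      intro y hy
      have hy0 : y ∈ Set.Ioi (0:ℝ) := hy.1
      have hmle := mono hy0 hbmem hy.2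
      exact le_of_lt ((div_lt_one (rho_pos y x' μ')).1 (lt_of_le_of_lt hmle hcase))
    have key : ∀ (xx mm : ℝ), (∫ y in Set.Ioc (0:ℝ) b, rho y xx mm) + ∫ y in Set.Ioi b, rho y xx mm = 1 := by
      intro xx mm
      rw [← setIntegral_union (Set.Ioc_disjoint_Ioi le_rfl) measurableSet_Ioi
        ((rho_integrable xx mm).integrableOn) ((rho_integrable xx mm).integrableOn),
        Set.Ioc_union_Ioi_eq_Ioi hb.le, rho_integral]
    have h1 := key x' μ'
    have h2 := key x'' μ''
    have h3 : ∫ y in Set.Ioc (0:ℝ) b, rho y x'' μ'' ≤ ∫ y in Set.Ioc (0:ℝ) b, rho y x' μ' :=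
      setIntegral_mono_on ((rho_integrable x'' μ'').integrableOn)
        ((rho_integrable x' μ').integrableOn) measurableSet_Ioc hle
    linarith
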